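/- Assume q₂ > 0 and c₂ > 0. Define F : [0,1] → ℝ by F(s) = 2dc₂a/(2dc₂(a+q₁) + q₂(√(d(d + 4c₁c₂s)) − d)). Then F is strictly decreasing on [0,1] with values in (0, a/(a+q₁)], F has a unique fixed point p₁ ∈ (0,1), and, setting p₂ = (−d + √(d(d + 4c₁c₂p₁)))/(2d·c₂), the point (p₁, p₂, 0) is the unique zero of the vector field g(·,0) in [0,∞)³. -/

import Mathlib

open Set Real

theorem stmt_11
    (a q₁ c₁ d c₁M dM q₂ q₃ c₂ c₃ c₂M c₃M : ℝ)
    (ha : 0 < a) (hq₁ : 0 < q₁) (hc₁ : 0 < c₁) (hd : 0 < d)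
    (hc₁M : 0 < c₁M) (hdM : 0 < dM)
    (hq₂ : 0 ≤ q₂) (hq₃ : 0 ≤ q₃) (hc₂ : 0 ≤ c₂) (hc₃ : 0 ≤ c₃)
    (hc₂M : 0 ≤ c₂M) (hc₃M : 0 ≤ c₃M)
    (g : ℝ × ℝ × ℝ → ℝ → ℝ × ℝ × ℝ)
    (hg : ∀ (x : ℝ × ℝ × ℝ) (i : ℝ), g x i =
      (a * (1 - x.1) - (q₁ + q₂ * x.2.1 + q₃ * x.2.2) * x.1,
       c₁ / (1 + c₂ * x.2.1 + c₃ * x.2.2) * x.1 - d * x.2.1,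
       c₁M / (1 + c₂M * x.2.1 + c₃M * x.2.2) * i - dM * x.2.2))
    (hq₂pos : 0 < q₂) (hc₂pos : 0 < c₂)
    (F : ℝ → ℝ)
    (hF : ∀ s, F s = 2 * d * c₂ * a /
      (2 * d * c₂ * (a + q₁) + q₂ * (Real.sqrt (d * (d + 4 * c₁ * c₂ * s)) - d))) :
    StrictAntiOn F (Icc 0 1) ∧
    (∀ s ∈ Icc (0:ℝ) 1, F s ∈ Ioc 0 (a / (a + q₁))) ∧
    ∃ p₁ ∈ Ioo (0:ℝ) 1, F p₁ = p₁ ∧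
      (∀ s ∈ Ioo (0:ℝ) 1, F s = s → s = p₁) ∧
      g (p₁, (-d + Real.sqrt (d * (d + 4 * c₁ * c₂ * p₁))) / (2 * d * c₂), 0) 0
        = 0 ∧
      ∀ y : ℝ × ℝ × ℝ, 0 ≤ y.1 → 0 ≤ y.2.1 → 0 ≤ y.2.2 → g y 0 = 0 →
        y = (p₁, (-d + Real.sqrt (d * (d + 4 * c₁ * c₂ * p₁))) / (2 * d * c₂), 0) := by
  -- Basic facts about the square root term
  have hargnn : ∀ s : ℝ, 0 ≤ s → (0:ℝ) ≤ d * (d + 4 * c₁ * c₂ * s) := by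
    intro s hs; positivity
  have hSge : ∀ s : ℝ, 0 ≤ s → d ≤ Real.sqrt (d * (d + 4 * c₁ * c₂ * s)) := by
    intro s hs
    calc d = Real.sqrt (d * d) := (Real.sqrt_mul_self hd.le).symm
    _ ≤ _ := Real.sqrt_le_sqrt (by
        nlinarith [mul_nonneg (mul_nonneg (mul_nonneg hd.le hc₁.le) hc₂pos.le) hs])
  have hNpos : (0:ℝ) < 2 * d * c₂ * a := by positivity
  have hDpos : ∀ s : ℝ, 0 ≤ s →
      0 < 2 * d * c₂ * (a + q₁) + q₂ * (Real.sqrt (d * (d + 4 * c₁ * c₂ * s)) - d) := by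
    intro s hs
    have h1 := hSge s hs
    have h2 : 0 ≤ q₂ * (Real.sqrt (d * (d + 4 * c₁ * c₂ * s)) - d) :=
      mul_nonneg hq₂ (by linarith)
    have h3 : (0:ℝ) < 2 * d * c₂ * (a + q₁) := by positivity
    linarith
  -- Strict antitonicity
  have hanti : StrictAntiOn F (Icc (0:ℝ) 1) := by
    intro s hs t ht hst
    rw [hF, hF]
    apply div_lt_div_of_pos_left hNpos (hDpos s hs.1)
    have hlt : Real.sqrt (d * (d + 4 * c₁ * c₂ * s)) <
        Real.sqrt (d * (d + 4 * c₁ * c₂ * t)) := by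
      apply Real.sqrt_lt_sqrt (hargnn s hs.1)
      nlinarith [mul_pos (mul_pos (mul_pos (by norm_num : (0:ℝ) < 4) hc₁)
        (mul_pos hc₂pos hd)) (sub_pos.2 hst)]
    nlinarith [mul_pos hq₂pos (sub_pos.2 hlt)]
  -- Range
  have hrange : ∀ s ∈ Icc (0:ℝ) 1, F s ∈ Ioc 0 (a / (a + q₁)) := by
    intro s hs
    constructor
    · rw [hF]; exact div_pos hNpos (hDpos s hs.1)
    · rw [hF]
      have hkey : (2 * d * c₂ * a) / (2 * d * c₂ * (a + q₁)) = a / (a + q₁) :=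
        mul_div_mul_left a (a + q₁) (by positivity)
      rw [← hkey]
      apply div_le_div_of_nonneg_left hNpos.le (by positivity)
      nlinarith [mul_nonneg hq₂ (sub_nonneg.2 (hSge s hs.1))]
  -- continuity
  have hcont : ContinuousOn F (Icc (0:ℝ) 1) := by
    have hFe : F = fun s => 2 * d * c₂ * a /
        (2 * d * c₂ * (a + q₁) + q₂ * (Real.sqrt (d * (d + 4 * c₁ * c₂ * s)) - d)) :=
      funext hF
    rw [hFe]
    apply ContinuousOn.div continuousOn_const
    · fun_prop
    · intro s hs; exact (hDpos s hs.1).ne'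
  -- fixed point existence
  have hF0 : F 0 = a / (a + q₁) := by
    rw [hF]
    have h1 : d * (d + 4 * c₁ * c₂ * 0) = d * d := by ring
    rw [h1, Real.sqrt_mul_self hd.le]
    rw [show q₂ * (d - d) = 0 by ring, add_zero]
    exact mul_div_mul_left a (a + q₁) (by positivity)
  have hfrac1 : a / (a + q₁) < 1 := by
    rw [div_lt_one (by positivity)]; linarith
  have hG0 : 0 < F 0 - 0 := by
    rw [hF0, sub_zero]; positivity
  have hG1 : F 1 - 1 < 0 := by
    have := (hrange 1 ⟨zero_le_one, le_refl 1⟩).2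
    linarith
  have hGcont : ContinuousOn (fun s => F s - s) (Icc (0:ℝ) 1) :=
    hcont.sub continuousOn_id
  obtain ⟨p₁, hp₁mem, hp₁eq⟩ :
      ∃ p₁ ∈ Ioo (0:ℝ) 1, F p₁ - p₁ = 0 := by
    have h := intermediate_value_Ioo' (zero_le_one) hGcont
    have h0 : (0:ℝ) ∈ Ioo (F 1 - 1) (F 0 - 0) := ⟨hG1, hG0⟩
    obtain ⟨p, hp, hpe⟩ := h h0
    exact ⟨p, hp, hpe⟩
  have hFp₁ : F p₁ = p₁ := by linarith [hp₁eq]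
  -- uniqueness of fixed point
  have huniq : ∀ s ∈ Ioo (0:ℝ) 1, F s = s → s = p₁ := by
    intro s hs hFs
    have hsI : s ∈ Icc (0:ℝ) 1 := Ioo_subset_Icc_self hs
    have hpI : p₁ ∈ Icc (0:ℝ) 1 := Ioo_subset_Icc_self hp₁mem
    rcases lt_trichotomy s p₁ with h | h | h
    · have h2 := hanti hsI hpI h; rw [hFs, hFp₁] at h2; exact absurd h2 (asymm h)
    · exact h
    · have h2 := hanti hpI hsI h; rw [hFs, hFp₁] at h2; exact absurd h2 (asymm h)
  -- the candidate zero
  set S₁ := Real.sqrt (d * (d + 4 * c₁ * c₂ * p₁)) with hS₁def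
  set P := (-d + S₁) / (2 * d * c₂) with hPdef
  have hp₁pos := hp₁mem.1
  have hS₁ge : d ≤ S₁ := hSge p₁ hp₁pos.le
  have hS₁sq : S₁ ^ 2 = d * (d + 4 * c₁ * c₂ * p₁) :=
    Real.sq_sqrt (hargnn p₁ hp₁pos.le)
  have h2dc : (0:ℝ) < 2 * d * c₂ := by positivity
  have hPnn : 0 ≤ P := by
    rw [hPdef]; apply div_nonneg (by linarith) h2dc.le
  have hS₁e : S₁ = 2 * d * c₂ * P + d := by
    rw [hPdef]; field_simp; ring
  have hkey : d * c₂ * P ^ 2 + d * P = c₁ * p₁ := by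
    have h4 : 4 * d * c₂ * (d * c₂ * P ^ 2 + d * P) = 4 * d * c₂ * (c₁ * p₁) := by
      linear_combination hS₁sq - (S₁ + 2 * d * c₂ * P + d) * hS₁e
    exact mul_left_cancel₀ (by positivity : (4*d*c₂:ℝ) ≠ 0) h4
  have h1P : (0:ℝ) < 1 + c₂ * P := by
    have := mul_nonneg hc₂pos.le hPnn; linarith
  have hmain : p₁ * (2 * d * c₂ * (a + q₁) + q₂ * (S₁ - d)) = 2 * d * c₂ * a := by
    have h5 := hFp₁
    rw [hF, div_eq_iff (hDpos p₁ hp₁pos.le).ne'] at h5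
    rw [← hS₁def] at h5
    linarith
  have hA : p₁ * (a + q₁ + q₂ * P) = a := by
    have h4 : (2 * d * c₂) * (p₁ * (a + q₁ + q₂ * P)) = (2 * d * c₂) * a := by
      linear_combination hmain - p₁ * q₂ * hS₁e
    exact mul_left_cancel₀ h2dc.ne' h4
  have hgzero : g (p₁, P, 0) 0 = 0 := by
    rw [hg]
    refine Prod.ext ?_ (Prod.ext ?_ ?_)
    · show a * (1 - p₁) - (q₁ + q₂ * P + q₃ * 0) * p₁ = 0
      linear_combination -hA
    · show c₁ / (1 + c₂ * P + c₃ * 0) * p₁ - d * P = 0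
      rw [mul_zero, add_zero, div_mul_eq_mul_div, sub_eq_iff_eq_add, zero_add,
        div_eq_iff h1P.ne']
      linear_combination -hkey
    · show c₁M / (1 + c₂M * P + c₃M * 0) * 0 - dM * 0 = (0:ℝ)
      ring
  -- uniqueness of the zero
  refine ⟨hanti, hrange, p₁, hp₁mem, hFp₁, huniq, hgzero, ?_⟩
  rintro ⟨y₁, y₂, y₃⟩ hy₁ hy₂ hy₃ hzero
  rw [hg] at hzero
  simp only [Prod.mk.injEq, Prod.mk_eq_zero] at hzero
  obtain ⟨E1, E2, E3⟩ := hzero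
  simp only [mul_zero, zero_sub, neg_eq_zero] at E3
  have hy₃0 : y₃ = 0 := by
    rcases mul_eq_zero.1 E3 with h | h
    · exact absurd h hdM.ne'
    · exact h
  subst hy₃0
  rw [mul_zero, add_zero] at E2 E1
  have h1y : (0:ℝ) < 1 + c₂ * y₂ := by
    have := mul_nonneg hc₂pos.le hy₂; linarith
  have hkeyY : d * c₂ * y₂ ^ 2 + d * y₂ = c₁ * y₁ := by
    rw [div_mul_eq_mul_div, sub_eq_iff_eq_add, zero_add, div_eq_iff h1y.ne'] at E2
    linear_combination -E2
  have hAY : y₁ * (a + q₁ + q₂ * y₂) = a := by linear_combination -E1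
  have hy₁pos : 0 < y₁ := by
    by_contra h
    push_neg at h
    have h6 : (0:ℝ) < a + q₁ + q₂ * y₂ := by
      have := mul_nonneg hq₂pos.le hy₂; linarith
    have h9 : y₁ * (a + q₁ + q₂ * y₂) ≤ 0 := mul_nonpos_of_nonpos_of_nonneg h h6.le
    linarith
  have hy₁lt : y₁ < 1 := by
    have h6 : (0:ℝ) < a + q₁ + q₂ * y₂ := by
      have := mul_nonneg hq₂pos.le hy₂; linarith
    have hy₁eq : y₁ = a / (a + q₁ + q₂ * y₂) := by
      rw [eq_div_iff h6.ne']; linarith [hAY]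
    rw [hy₁eq, div_lt_one h6]
    have := mul_nonneg hq₂pos.le hy₂
    linarith
  have hSy : Real.sqrt (d * (d + 4 * c₁ * c₂ * y₁)) = 2 * d * c₂ * y₂ + d := by
    have h7 : d * (d + 4 * c₁ * c₂ * y₁) = (2 * d * c₂ * y₂ + d) ^ 2 := by
      linear_combination (-(4 * d * c₂)) * hkeyY
    rw [h7, Real.sqrt_sq (by positivity)]
  have hFy : F y₁ = y₁ := by
    rw [hF, hSy, div_eq_iff]
    · linear_combination (-(2 * d * c₂)) * hAY
    · have h8 : 2 * d * c₂ * (a + q₁) + q₂ * (2 * d * c₂ * y₂ + d - d)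
          = 2 * d * c₂ * (a + q₁) + q₂ * 2 * d * c₂ * y₂ := by ring
      rw [h8]
      have t1 : (0:ℝ) < 2 * d * c₂ * (a + q₁) := by positivity
      have t2 : (0:ℝ) ≤ q₂ * 2 * d * c₂ * y₂ :=
        mul_nonneg (by positivity) hy₂
      linarith
  have hy₁p : y₁ = p₁ := huniq y₁ ⟨hy₁pos, hy₁lt⟩ hFy
  subst hy₁p
  have hy₂P : y₂ = P := by
    rw [hPdef, hS₁def, hSy]
    field_simp; ring
  rw [hy₂P]
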